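/- Let C : ℝ → ℝ be continuous and satisfy |C(x)| ≤ K·(1+|x|)^(−β) for some K > 0 and β > 1, and suppose C is a covariance function so that ∫_{-L}^{L}∫_{-L}^{L} C(x−x') dx dx' ≥ 0 for all L > 0 and ∫_ℝ C exists. If C is not identically zero, then ∫_ℝ (exp(C(x)) − 1) dx > 0. -/

import Mathlib

open MeasureTheory

private lemma aux_quad (s : ℝ) (hs : 0 ≤ s) : s^2/2 ≤ (s-1)*Real.exp s + 1 := by
  have key : ∀ t : ℝ, HasDerivAt (fun u => (u-1)*Real.exp u + 1 - u^2/2) (t * Real.exp t - t) t := by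
    intro t
    have h1 : HasDerivAt (fun u : ℝ => (u-1)*Real.exp u) (1 * Real.exp t + (t-1)*Real.exp t) t :=
      ((hasDerivAt_id t).sub_const 1).mul (Real.hasDerivAt_exp t)
    have h2 : HasDerivAt (fun u : ℝ => u^2/2) t t := by
      have h := (hasDerivAt_pow 2 t).div_const 2
      norm_num at h
      exact h
    have h3 := (h1.add_const 1).sub h2
    exact h3.congr_deriv (by ring)
  have hdiff : ∀ t : ℝ, DifferentiableAt ℝ (fun u => (u-1)*Real.exp u + 1 - u^2/2) t :=
    fun t => (key t).differentiableAt
  have hmono : MonotoneOn (fun u => (u-1)*Real.exp u + 1 - u^2/2) (Set.Ici 0) := by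
    apply monotoneOn_of_deriv_nonneg (convex_Ici 0)
    · exact (Differentiable.continuous (fun t => hdiff t)).continuousOn
    · exact fun x _ => (hdiff x).differentiableWithinAt
    · intro x hx
      rw [interior_Ici] at hx
      rw [(key x).deriv]
      nlinarith [Real.add_one_le_exp x, le_of_lt (Set.mem_Ioi.1 hx)]
  have h := hmono Set.self_mem_Ici (Set.mem_Ici.2 hs) hs
  simp only at h
  norm_num at h
  nlinarith [h]

private lemma exp_quad (M t : ℝ) (hM : 0 ≤ M) (ht : |t| ≤ M) :
    t + Real.exp (-M) / 2 * t^2 ≤ Real.exp t - 1 := by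
  have hexpM : Real.exp (-M) ≤ 1 := Real.exp_le_one_iff.2 (by linarith)
  rcases le_or_gt 0 t with h | h
  · have hsum := Real.sum_le_exp_of_nonneg h 3
    have : (1:ℝ) + t + t^2/2 ≤ Real.exp t := by
      have e : ∑ i ∈ Finset.range 3, t ^ i / (Nat.factorial i : ℝ) = 1 + t + t^2/2 := by
        simp [Finset.sum_range_succ, Nat.factorial]
      linarith [e ▸ hsum]
    nlinarith [sq_nonneg t]
  · set s := -t with hs
    have hs0 : 0 ≤ s := by simp [hs]; linarith
    have hsM : s ≤ M := by
      have := abs_le.1 ht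
      simp [hs]; linarith [this.1]
    have hq := aux_quad s hs0
    have hprod : Real.exp (-s) * Real.exp s = 1 := by
      rw [← Real.exp_add]; simp
    have h1 : Real.exp (-s) * (s^2/2) ≤ Real.exp (-s) * ((s-1)*Real.exp s + 1) :=
      mul_le_mul_of_nonneg_left hq (Real.exp_pos _).le
    have h2 : Real.exp (-s) * ((s-1)*Real.exp s + 1) = (s - 1) + Real.exp (-s) := by
      have := hprod; nlinarith [hprod]
    have h3 : Real.exp (-M) ≤ Real.exp (-s) := Real.exp_le_exp.2 (by linarith)
    have hts : t = -s := by simp [hs]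
    rw [hts]
    have h4 : Real.exp (-M) * s^2 ≤ Real.exp (-s) * s^2 :=
      mul_le_mul_of_nonneg_right h3 (sq_nonneg s)
    nlinarith [h1, h2, h4]

private lemma exp_sub_one_abs_le (K t : ℝ) (hK : 0 ≤ K) (ht : |t| ≤ K) :
    |Real.exp t - 1| ≤ Real.exp K * |t| := by
  have hK1 : (1:ℝ) ≤ Real.exp K := by
    have := Real.add_one_le_exp K; linarith
  rcases le_or_gt 0 t with h | h
  · have habs : |t| = t := abs_of_nonneg h
    have h1 : 1 + t ≤ Real.exp t := by linarith [Real.add_one_le_exp t]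
    rw [abs_of_nonneg (by linarith), habs]
    have h2 : Real.exp (-t) * Real.exp t = 1 := by rw [← Real.exp_add]; simp
    have h3 : 1 + (-t) ≤ Real.exp (-t) := by linarith [Real.add_one_le_exp (-t)]
    have h4 : Real.exp t ≤ Real.exp K := Real.exp_le_exp.2 (by rw [habs] at ht; linarith)
    -- exp t - 1 ≤ t * exp t ≤ t * exp K
    nlinarith [Real.exp_pos t]
  · have habs : |t| = -t := abs_of_neg h
    have h1 : t + 1 ≤ Real.exp t := Real.add_one_le_exp t
    have h2 : Real.exp t ≤ 1 := Real.exp_le_one_iff.2 h.le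
    rw [abs_of_nonpos (by linarith), habs]
    nlinarith
open MeasureTheory intervalIntegral

private lemma integral_nonneg_of_posdef (C : ℝ → ℝ) (hcont : Continuous C) (hint : Integrable C)
    (hposdef : ∀ L : ℝ, 0 < L →
      0 ≤ ∫ x in (-L)..L, ∫ x' in (-L)..L, C (x - x')) :
    0 ≤ ∫ x : ℝ, C x := by
  by_contra hcon
  push_neg at hcon
  set I := ∫ x : ℝ, C x with hI
  set A := ∫ x : ℝ, |C x| with hA
  have hintabs : Integrable (fun x => |C x|) := hint.abs
  have hA0 : 0 ≤ A := integral_nonneg (fun x => abs_nonneg _)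
  set ε := -I/8 with hε
  have hεpos : 0 < ε := by rw [hε]; linarith
  have hCi : ∀ a b : ℝ, IntervalIntegrable C volume a b := fun a b => hint.intervalIntegrable
  have hCai : ∀ a b : ℝ, IntervalIntegrable (fun x => |C x|) volume a b :=
    fun a b => hintabs.intervalIntegrable
  set F2 : ℝ → ℝ := fun R => ∫ x in (-R)..R, |C x| with hF2def
  -- continuity of F2
  have hHabscont : Continuous (fun t => ∫ u in (0:ℝ)..t, |C u|) :=
    intervalIntegral.continuous_primitive hCai 0
  have hF2eq : ∀ R : ℝ, F2 R = (∫ u in (0:ℝ)..R, |C u|) - ∫ u in (0:ℝ)..(-R), |C u| :=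
    fun R => (integral_interval_sub_left (hCai 0 R) (hCai 0 (-R))).symm
  have hF2cont : Continuous F2 := by
    have : F2 = fun R => (∫ u in (0:ℝ)..R, |C u|) - ∫ u in (0:ℝ)..(-R), |C u| :=
      funext hF2eq
    rw [this]
    exact hHabscont.sub (hHabscont.comp continuous_neg)
  set T : ℝ → ℝ := fun s => A - F2 s with hTdef
  have hTcont : Continuous T := continuous_const.sub hF2cont
  -- tendsto
  have htend : Filter.Tendsto F2 Filter.atTop (nhds A) :=
    intervalIntegral_tendsto_integral hintabs Filter.tendsto_neg_atTop_atBot Filter.tendsto_id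
  obtain ⟨N, hN⟩ := Metric.tendsto_atTop.1 htend ε hεpos
  set R₀ := max N 1 with hR₀def
  have hR₀1 : (1:ℝ) ≤ R₀ := le_max_right _ _
  have hR₀0 : (0:ℝ) ≤ R₀ := by linarith
  have hR₀ : T R₀ ≤ ε := by
    have := hN R₀ (le_max_left _ _)
    rw [Real.dist_eq] at this
    have := abs_lt.1 this
    simp only [hTdef]
    linarith [this.1]
  -- key inequality for each L ≥ R₀
  have hLkey : ∀ L : ℝ, R₀ ≤ L → (-I) * L ≤ 4 * R₀ * A := by
    intro L hL
    have hL0 : 0 < L := lt_of_lt_of_le (by linarith) hL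
    -- step 1
    have h0 : 0 ≤ ∫ x in (-L)..L, (∫ u in (x - L)..(x + L), C u) := by
      have hrw : ∀ x : ℝ, (∫ x' in (-L)..L, C (x - x')) = ∫ u in (x - L)..(x + L), C u := by
        intro x
        rw [intervalIntegral.integral_comp_sub_left (fun u => C u) x]
        norm_num
      calc (0:ℝ) ≤ ∫ x in (-L)..L, ∫ x' in (-L)..L, C (x - x') := hposdef L hL0
        _ = _ := by simp only [hrw]
    -- continuity of g
    have hHcont : Continuous (fun t => ∫ u in (0:ℝ)..t, C u) :=
      intervalIntegral.continuous_primitive hCi 0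
    have hgeq : ∀ x : ℝ, (∫ u in (x - L)..(x + L), C u) =
        (∫ u in (0:ℝ)..(x+L), C u) - ∫ u in (0:ℝ)..(x-L), C u :=
      fun x => (integral_interval_sub_left (hCi 0 (x+L)) (hCi 0 (x-L))).symm
    have hgcont : Continuous (fun x => ∫ u in (x - L)..(x + L), C u) := by
      have : (fun x => ∫ u in (x - L)..(x + L), C u)
          = fun x => (∫ u in (0:ℝ)..(x+L), C u) - ∫ u in (0:ℝ)..(x-L), C u := funext hgeq
      rw [this]
      exact (hHcont.comp (continuous_id.add continuous_const)).sub
        (hHcont.comp (continuous_id.sub continuous_const))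
    -- pointwise bound
    have hkey : ∀ x ∈ Set.Icc (-L) L,
        (∫ u in (x - L)..(x + L), C u) ≤ I + 2 * T (L - |x|) := by
      intro x hx
      obtain ⟨hx1, hx2⟩ := hx
      have habsx : |x| ≤ L := abs_le.2 ⟨hx1, hx2⟩
      set R := L - |x| with hRdef
      have hR0 : 0 ≤ R := by simp [hRdef]; linarith
      have ha : x - L ≤ -R := by
        have := le_abs_self x; simp only [hRdef]; linarith
      have hb : R ≤ x + L := by
        have := neg_abs_le x; simp only [hRdef]; linarith
      have hRR : -R ≤ R := by linarith
      have hab : x - L ≤ x + L := by linarith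
      -- decomposition
      have e1 := integral_add_adjacent_intervals (hCi (x-L) (-R)) (hCi (-R) R)
      have e2 := integral_add_adjacent_intervals (hCi (x-L) R) (hCi R (x+L))
      have t1 : (∫ u in (x-L)..(-R), C u) ≤ ∫ u in (x-L)..(-R), |C u| :=
        le_trans (le_abs_self _) (intervalIntegral.abs_integral_le_integral_abs ha)
      have t2 : (∫ u in R..(x+L), C u) ≤ ∫ u in R..(x+L), |C u| :=
        le_trans (le_abs_self _) (intervalIntegral.abs_integral_le_integral_abs hb)
      have ea1 := integral_add_adjacent_intervals (hCai (x-L) (-R)) (hCai (-R) R)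
      have ea2 := integral_add_adjacent_intervals (hCai (x-L) R) (hCai R (x+L))
      have hABtot : (∫ u in (x-L)..(x+L), |C u|) ≤ A := by
        rw [intervalIntegral.integral_of_le hab]
        exact setIntegral_le_integral hintabs
          (Filter.Eventually.of_forall fun y => abs_nonneg _)
      have hmid : (∫ u in (-R)..R, C u) ≤ I + (A - F2 R) := by
        have hmeq := integral_add_compl (measurableSet_Ioc (a := -R) (b := R)) hint
        have hmeqa := integral_add_compl (measurableSet_Ioc (a := -R) (b := R)) hintabs
        have hceq : (∫ u in (-R)..R, C u) = ∫ u in Set.Ioc (-R) R, C u :=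
          intervalIntegral.integral_of_le hRR
        have hceqa : F2 R = ∫ u in Set.Ioc (-R) R, |C u| :=
          intervalIntegral.integral_of_le hRR
        have habs2 : |∫ u in (Set.Ioc (-R) R)ᶜ, C u| ≤ ∫ u in (Set.Ioc (-R) R)ᶜ, |C u| := by
          simpa [Real.norm_eq_abs] using MeasureTheory.norm_integral_le_integral_norm
            (f := C) (μ := volume.restrict (Set.Ioc (-R) R)ᶜ)
        have := abs_le.1 habs2
        rw [hceq]
        rw [hceqa] at *
        linarith [this.1, hmeq, hmeqa]
      simp only [hTdef]
      linarith [t1, t2, e1, e2, ea1, ea2, hABtot, hmid]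
    -- integral mono
    have hRHScont : Continuous (fun x : ℝ => I + 2 * T (L - |x|)) :=
      continuous_const.add (continuous_const.mul
        (hTcont.comp (continuous_const.sub continuous_abs)))
    have hmono : (∫ x in (-L)..L, (∫ u in (x - L)..(x + L), C u))
        ≤ ∫ x in (-L)..L, (I + 2 * T (L - |x|)) :=
      intervalIntegral.integral_mono_on (by linarith)
        (hgcont.intervalIntegrable _ _) (hRHScont.intervalIntegrable _ _) hkey
    -- compute RHS
    have hTabscont : Continuous (fun x : ℝ => T (L - |x|)) :=
      hTcont.comp (continuous_const.sub continuous_abs)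
    have hRHSsplit : (∫ x in (-L)..L, (I + 2 * T (L - |x|)))
        = 2 * L * I + 2 * ∫ x in (-L)..L, T (L - |x|) := by
      rw [intervalIntegral.integral_add (f := fun _ => I) (g := fun x => 2 * T (L - |x|)) (intervalIntegrable_const)
        ((continuous_const.mul hTabscont).intervalIntegrable _ _ : IntervalIntegrable (fun x => 2 * T (L - |x|)) volume (-L) L),
        intervalIntegral.integral_const, intervalIntegral.integral_const_mul]
      simp only [smul_eq_mul]; ring
    -- fold: ∫_{-L}^L T(L-|x|) = 2 ∫_0^L T
    have hfold : (∫ x in (-L)..L, T (L - |x|)) = 2 * ∫ s in (0:ℝ)..L, T s := by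
      have hsplit := integral_add_adjacent_intervals (μ := volume)
        (hTabscont.intervalIntegrable (-L) 0) (hTabscont.intervalIntegrable 0 L)
      have h1 : (∫ x in (-L)..(0:ℝ), T (L - |x|)) = ∫ x in (-L)..(0:ℝ), T (L + x) := by
        apply intervalIntegral.integral_congr
        intro x hx
        rw [Set.uIcc_of_le (by linarith : -L ≤ (0:ℝ))] at hx
        show T (L - |x|) = T (L + x)
        rw [abs_of_nonpos hx.2]
        ring_nf
      have h2 : (∫ x in (0:ℝ)..L, T (L - |x|)) = ∫ x in (0:ℝ)..L, T (L - x) := by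
        apply intervalIntegral.integral_congr
        intro x hx
        rw [Set.uIcc_of_le (by linarith : (0:ℝ) ≤ L)] at hx
        show T (L - |x|) = T (L - x)
        rw [abs_of_nonneg hx.1]
      have h3 : (∫ x in (-L)..(0:ℝ), T (L + x)) = ∫ s in (0:ℝ)..L, T s := by
        rw [intervalIntegral.integral_comp_add_left T L]
        norm_num
      have h4 : (∫ x in (0:ℝ)..L, T (L - x)) = ∫ s in (0:ℝ)..L, T s := by
        rw [intervalIntegral.integral_comp_sub_left T L]
        norm_num
      linarith [hsplit, h1, h2, h3, h4]
    -- bound ∫_0^L T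
    have hTsplit := integral_add_adjacent_intervals (μ := volume)
      (hTcont.intervalIntegrable (0:ℝ) R₀) (hTcont.intervalIntegrable R₀ L)
    have hT1 : (∫ s in (0:ℝ)..R₀, T s) ≤ R₀ * A := by
      have hle : (∫ s in (0:ℝ)..R₀, T s) ≤ ∫ s in (0:ℝ)..R₀, A :=
        intervalIntegral.integral_mono_on hR₀0 (hTcont.intervalIntegrable _ _)
          intervalIntegrable_const
          (fun s hs => by
            have hF2nn : 0 ≤ F2 s := intervalIntegral.integral_nonneg
              (by linarith [hs.1] : -s ≤ s) (fun u _ => abs_nonneg _)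
            simp only [hTdef]
            linarith)
      simpa [smul_eq_mul] using hle
    have hT2 : (∫ s in R₀..L, T s) ≤ L * ε := by
      have hle : (∫ s in R₀..L, T s) ≤ ∫ s in R₀..L, ε :=
        intervalIntegral.integral_mono_on hL (hTcont.intervalIntegrable _ _)
          intervalIntegrable_const
          (fun s hs => by
            have hmon : F2 R₀ ≤ F2 s := by
              apply intervalIntegral.integral_mono_interval
                (by linarith [hs.1] : -s ≤ -R₀) (by linarith : -R₀ ≤ R₀)
                (hs.1) (Filter.Eventually.of_forall fun u => abs_nonneg _)
                (hCai _ _)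
            simp only [hTdef] at hR₀ ⊢
            linarith)
      have : (∫ s in R₀..L, ε) = (L - R₀) * ε := by
        rw [intervalIntegral.integral_const, smul_eq_mul]
      rw [this] at hle
      nlinarith [hεpos, hR₀0]
    -- assemble
    have hfinal : 0 ≤ 2 * L * I + 2 * (2 * (R₀ * A + L * ε)) := by
      have c1 : (∫ s in (0:ℝ)..L, T s) ≤ R₀ * A + L * ε := by linarith
      calc (0:ℝ) ≤ ∫ x in (-L)..L, (∫ u in (x - L)..(x + L), C u) := h0
        _ ≤ ∫ x in (-L)..L, (I + 2 * T (L - |x|)) := hmono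
        _ = 2 * L * I + 2 * ∫ x in (-L)..L, T (L - |x|) := hRHSsplit
        _ = 2 * L * I + 2 * (2 * ∫ s in (0:ℝ)..L, T s) := by rw [hfold]
        _ ≤ 2 * L * I + 2 * (2 * (R₀ * A + L * ε)) := by linarith
    -- 0 ≤ 2LI + 4R₀A + 4Lε, ε = -I/8 so 4Lε = -LI/2
    rw [hε] at hfinal
    nlinarith [hfinal]
  -- contradiction
  set L := max R₀ ((4 * R₀ * A + 1) / (-I)) with hLdef
  have hL1 : R₀ ≤ L := le_max_left _ _
  have hL2 : (4 * R₀ * A + 1) / (-I) ≤ L := le_max_right _ _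
  have hIneg : 0 < -I := by linarith
  have := hLkey L hL1
  have hbig : 4 * R₀ * A + 1 ≤ (-I) * L := by
    rw [div_le_iff₀ hIneg] at hL2
    linarith [hL2]
  linarith

theorem integral_exp_sub_one_pos (C : ℝ → ℝ) (K β : ℝ) (hK : 0 < K) (hβ : 1 < β)
    (hcont : Continuous C) (hbound : ∀ x : ℝ, |C x| ≤ K * (1 + |x|) ^ (-β))
    (hint : Integrable C)
    (hposdef : ∀ L : ℝ, 0 < L →
      0 ≤ ∫ x in (-L)..L, ∫ x' in (-L)..L, C (x - x'))
    (hne : C ≠ 0) :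
    0 < ∫ x : ℝ, (Real.exp (C x) - 1) := by
  have hKb : ∀ x, |C x| ≤ K := by
    intro x
    have h1 : (1 + |x|) ^ (-β) ≤ 1 :=
      Real.rpow_le_one_of_one_le_of_nonpos (by linarith [abs_nonneg x]) (by linarith)
    have := hbound x
    nlinarith
  set c := Real.exp (-K) / 2 with hc
  have hcpos : 0 < c := by positivity
  have hptwise : ∀ x, C x + c * (C x)^2 ≤ Real.exp (C x) - 1 :=
    fun x => exp_quad K (C x) hK.le (hKb x)
  have hintC2 : Integrable (fun x => (C x)^2) := by
    apply Integrable.mono (hint.norm.const_mul K) ((hcont.pow 2).aestronglyMeasurable)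
    apply Filter.Eventually.of_forall
    intro x
    simp only [norm_pow, Real.norm_eq_abs, sq_abs, Pi.pow_apply, abs_pow]
    rw [abs_of_nonneg (by positivity : (0:ℝ) ≤ K * |C x|)]
    nlinarith [hKb x, abs_nonneg (C x), sq_abs (C x)]
  have hintexp : Integrable (fun x => Real.exp (C x) - 1) := by
    apply Integrable.mono (hint.norm.const_mul (Real.exp K))
      (((Real.continuous_exp.comp hcont).sub continuous_const).aestronglyMeasurable)
    apply Filter.Eventually.of_forall
    intro x
    simp only [Real.norm_eq_abs]
    rw [abs_of_nonneg (by positivity : (0:ℝ) ≤ Real.exp K * |C x|)]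
    exact exp_sub_one_abs_le K (C x) hK.le (hKb x)
  have hI0 : 0 ≤ ∫ x : ℝ, C x := integral_nonneg_of_posdef C hcont hint hposdef
  have hI2 : 0 < ∫ x : ℝ, (C x)^2 := by
    rw [MeasureTheory.integral_pos_iff_support_of_nonneg (fun x => sq_nonneg _) hintC2]
    have hsupp : Function.support (fun x => (C x)^2) = {x | C x ≠ 0} := by
      ext x
      simp [Function.support, pow_eq_zero_iff]
    rw [hsupp]
    apply IsOpen.measure_pos volume
    · exact isOpen_compl_singleton.preimage hcont
    · obtain ⟨x, hx⟩ := Function.ne_iff.1 hne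
      exact ⟨x, hx⟩
  have hmono : (∫ x : ℝ, (C x + c * (C x)^2)) ≤ ∫ x : ℝ, (Real.exp (C x) - 1) :=
    integral_mono (hint.add (hintC2.const_mul c)) hintexp hptwise
  rw [integral_add hint (hintC2.const_mul c), MeasureTheory.integral_const_mul] at hmono
  have hpos : 0 < c * ∫ x : ℝ, (C x)^2 := mul_pos hcpos hI2
  linarith
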